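/- Fix n_1 < ⋯ < n_g positive integers. The discriminant of τ_N(n,v,·) (as a degree-N polynomial in u), viewed as a polynomial in the variables v_1,…,v_g, is not identically zero; equivalently, there exists v ∈ (ℂ*)^g such that τ_N(n,v,·) has N simple roots. -/

import Mathlib

open Finset

/-- The Vandermonde determinant `θ(a₁,…,a_g) = ∏_{p<p'} (a_{p'} - a_p)`. -/
noncomputable def vdm {g : ℕ} (a : Fin g → ℂ) : ℂ :=
  ∏ p : Fin g, ∏ p' ∈ Finset.Ioi p, (a p' - a p)

/-- The `g×g` matrix `T(n,v,u)` with entries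
`T_{p,p'} = n_{p'}^{p-1} (v_{p'} u^{n_{p'}} - (-1)^p)`. -/
noncomputable def matT {g : ℕ} (n : Fin g → ℕ) (v : Fin g → ℂ) (u : ℂ) :
    Matrix (Fin g) (Fin g) ℂ :=
  fun p p' => (n p' : ℂ) ^ (p : ℕ) * (v p' * u ^ (n p') - (-1 : ℂ) ^ ((p : ℕ) + 1))


set_option maxHeartbeats 1000000

open Polynomial Matrix

namespace TauAux

variable {g : ℕ}

noncomputable def colMat (k : ℕ) (n : Fin g → ℕ) (s v : Fin g → ℂ) :
    Matrix (Fin g) (Fin g) (Polynomial ℂ) :=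
  fun p j => if (j : ℕ) < k then
      C (v j * (n j : ℂ) ^ (p : ℕ)) * X ^ (n j) + C ((-(n j : ℂ)) ^ (p : ℕ))
    else C ((s j * (n j : ℂ)) ^ (p : ℕ))

noncomputable def PP (k : ℕ) (n : Fin g → ℕ) (s v : Fin g → ℂ) : Polynomial ℂ :=
  (colMat k n s v).det

noncomputable def xt (k : ℕ) (n : Fin g → ℕ) (s : Fin g → ℂ) : Fin g → ℂ :=
  fun j => if (j : ℕ) < k then -(n j : ℂ) else s j * n j

noncomputable def yt (k : ℕ) (n : Fin g → ℕ) (s : Fin g → ℂ) : Fin g → ℂ :=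
  fun j => if (j : ℕ) < k then (n j : ℂ) else s j * n j

lemma vdm_eq_det (a : Fin g → ℂ) :
    Matrix.det (Matrix.of fun p j : Fin g => a j ^ (p : ℕ)) = vdm a := by
  have h : (Matrix.of fun p j : Fin g => a j ^ (p : ℕ)) = (Matrix.vandermonde a)ᵀ := by
    ext p j
    rw [Matrix.transpose_apply, Matrix.vandermonde_apply]
    rfl
  rw [h, Matrix.det_transpose, Matrix.det_vandermonde]
  rfl

lemma vdm_eq_det' (a : Fin g → ℂ) :
    (Matrix.det fun p j : Fin g => a j ^ (p : ℕ)) = vdm a := vdm_eq_det a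

lemma vdm_ne_zero {a : Fin g → ℂ} (ha : Function.Injective a) : vdm a ≠ 0 := by
  apply Finset.prod_ne_zero_iff.2
  intro p _
  apply Finset.prod_ne_zero_iff.2
  intro q hq
  have hqp : q ≠ p := (Finset.mem_Ioi.1 hq).ne'
  exact sub_ne_zero.2 fun h => hqp (ha h)

lemma cast_ne_neg_cast (n : Fin g → ℕ) (hpos : ∀ p, 0 < n p) (j q : Fin g) :
    ((n j : ℂ)) ≠ -(n q : ℂ) := by
  intro h
  have h0 : ((n j + n q : ℕ) : ℂ) = 0 := by push_cast; linear_combination h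
  rw [Nat.cast_eq_zero] at h0
  have := hpos j
  omega

lemma sign_tuple_inj (n : Fin g → ℕ) (hmono : StrictMono n) (hpos : ∀ p, 0 < n p)
    (a : Fin g → ℂ) (ha : ∀ j, a j = (n j : ℂ) ∨ a j = -(n j : ℂ)) :
    Function.Injective a := by
  intro j q h
  by_contra hne
  have hnn : n j ≠ n q := fun hh => hne (hmono.injective hh)
  rcases ha j with h1 | h1 <;> rcases ha q with h2 | h2 <;> rw [h1, h2] at h
  · exact hnn (Nat.cast_injective h)
  · exact cast_ne_neg_cast n hpos j q h
  · exact cast_ne_neg_cast n hpos q j (by linear_combination -h)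
  · exact hnn (Nat.cast_injective (neg_injective h))

end TauAux

namespace TauAux

variable {g : ℕ}

lemma eval_det (M : Matrix (Fin g) (Fin g) (Polynomial ℂ)) (u : ℂ) :
    (M.det).eval u = (M.map (fun p => p.eval u)).det := by
  have := RingHom.map_det (Polynomial.evalRingHom u) M
  rw [show (fun p : Polynomial ℂ => p.eval u) = (Polynomial.evalRingHom u : Polynomial ℂ → ℂ) from rfl]
  exact (RingHom.map_det (Polynomial.evalRingHom u) M).symm ▸ rfl

/-- P depends on s only through values on j ≥ k, and on v only through j < k. -/
lemma PP_congr {k : ℕ} {n : Fin g → ℕ} {s s' v v' : Fin g → ℂ}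
    (hs : ∀ j : Fin g, k ≤ (j : ℕ) → s j = s' j)
    (hv : ∀ j : Fin g, (j : ℕ) < k → v j = v' j) :
    PP k n s v = PP k n s' v' := by
  unfold PP colMat
  congr 1
  ext p j
  by_cases hj : (j : ℕ) < k
  · simp only [hj, if_true, hv j hj]
  · simp only [hj, if_false, hs j (le_of_not_gt hj)]

lemma PP_eval_zero (k : ℕ) (n : Fin g → ℕ) (hpos : ∀ p, 0 < n p) (s v : Fin g → ℂ) :
    (PP k n s v).eval 0 = vdm (xt k n s) := by
  rw [PP, eval_det]
  rw [← vdm_eq_det (xt k n s)]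
  congr 1
  ext p j
  simp only [Matrix.map_apply, colMat, Matrix.of_apply, xt]
  by_cases hj : (j : ℕ) < k
  · have : (0:ℂ) ^ (n j) = 0 := zero_pow (Nat.pos_iff_ne_zero.1 (hpos j))
    simp [hj, this]
  · simp [hj]

lemma coeff_mul_of_natDegree_le' {p q : Polynomial ℂ} {a b : ℕ}
    (hp : p.natDegree ≤ a) (hq : q.natDegree ≤ b) :
    (p * q).coeff (a + b) = p.coeff a * q.coeff b := by
  rw [Polynomial.coeff_mul]
  rw [Finset.sum_eq_single ((a, b) : ℕ × ℕ)]
  · intro x hx hne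
    rw [Finset.HasAntidiagonal.mem_antidiagonal] at hx
    by_cases h1 : a < x.1
    · rw [Polynomial.coeff_eq_zero_of_natDegree_lt (lt_of_le_of_lt hp h1), zero_mul]
    · have hx1 : x.1 ≤ a := le_of_not_gt h1
      have hne' : x.1 ≠ a ∨ x.2 ≠ b := by
        by_contra hc
        push_neg at hc
        exact hne (Prod.ext hc.1 hc.2)
      have h2 : b < x.2 := by omega
      rw [Polynomial.coeff_eq_zero_of_natDegree_lt (lt_of_le_of_lt hq h2), mul_zero]
  · intro h
    exact absurd (by simp : ((a, b) : ℕ × ℕ) ∈ Finset.HasAntidiagonal.antidiagonal (a + b)) h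

lemma coeff_prod_of_natDegree_le'' {ι : Type*} (s : Finset ι) (f : ι → Polynomial ℂ)
    (d : ι → ℕ) (h : ∀ i ∈ s, (f i).natDegree ≤ d i) :
    (∏ i ∈ s, f i).coeff (∑ i ∈ s, d i) = ∏ i ∈ s, (f i).coeff (d i) := by
  induction s using Finset.cons_induction with
  | empty => simp
  | cons a s ha ih =>
      rw [Finset.prod_cons, Finset.sum_cons, coeff_mul_of_natDegree_le' (h a (Finset.mem_cons_self a s))
        (le_trans (Polynomial.natDegree_prod_le _ _) (Finset.sum_le_sum (fun i hi => h i (Finset.mem_cons_of_mem hi)))),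
        ih (fun i hi => h i (Finset.mem_cons_of_mem hi)), Finset.prod_cons]

/-- degree bound of entries -/
lemma colMat_natDegree_le (k : ℕ) (n : Fin g → ℕ) (s v : Fin g → ℂ) (p j : Fin g) :
    (colMat k n s v p j).natDegree ≤ (if (j : ℕ) < k then n j else 0) := by
  unfold colMat
  by_cases hj : (j : ℕ) < k
  · simp only [hj, if_true]
    refine le_trans (Polynomial.natDegree_add_le _ _) ?_
    rw [Polynomial.natDegree_C]
    exact max_le (le_trans (Polynomial.natDegree_C_mul_le _ _)
      (le_of_eq (Polynomial.natDegree_X_pow _))) (Nat.zero_le _)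
  · simp only [hj, if_false, Polynomial.natDegree_C, le_refl]

lemma colMat_coeff_top (k : ℕ) (n : Fin g → ℕ) (hpos : ∀ p, 0 < n p) (s v : Fin g → ℂ) (p j : Fin g) :
    (colMat k n s v p j).coeff (if (j : ℕ) < k then n j else 0)
      = (if (j : ℕ) < k then v j else 1) * (yt k n s j) ^ (p : ℕ) := by
  unfold colMat yt
  by_cases hj : (j : ℕ) < k
  · simp only [hj, if_true]
    rw [Polynomial.coeff_add, Polynomial.coeff_C_mul, Polynomial.coeff_X_pow, if_pos rfl,
      Polynomial.coeff_C, if_neg (Nat.pos_iff_ne_zero.1 (hpos j)), mul_one, add_zero]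
  · simp only [hj, if_false, Polynomial.coeff_C_zero, yt, one_mul]

noncomputable def Nk (k : ℕ) (n : Fin g → ℕ) : ℕ :=
  ∑ j ∈ Finset.univ.filter (fun j : Fin g => (j : ℕ) < k), n j

lemma sum_dd (k : ℕ) (n : Fin g → ℕ) :
    ∑ j : Fin g, (if (j : ℕ) < k then n j else 0) = Nk k n := by
  rw [Nk, Finset.sum_filter]

lemma PP_coeff_top (k : ℕ) (n : Fin g → ℕ) (hpos : ∀ p, 0 < n p) (s v : Fin g → ℂ) :
    (PP k n s v).coeff (Nk k n)
      = (∏ j ∈ Finset.univ.filter (fun j : Fin g => (j : ℕ) < k), v j) * vdm (yt k n s) := by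
  rw [PP, Matrix.det_apply, Polynomial.finset_sum_coeff]
  have key : ∀ σ : Equiv.Perm (Fin g),
      (Equiv.Perm.sign σ • ∏ i : Fin g, colMat k n s v (σ i) i).coeff (Nk k n)
        = Equiv.Perm.sign σ • ∏ i : Fin g, ((if (i : ℕ) < k then v i else 1) * (yt k n s i) ^ ((σ i : ℕ))) := by
    intro σ
    rw [Polynomial.coeff_smul, ← sum_dd k n,
      coeff_prod_of_natDegree_le'' Finset.univ _ _ (fun i _ => colMat_natDegree_le k n s v (σ i) i)]
    congr 1
    exact Finset.prod_congr rfl (fun i _ => colMat_coeff_top k n hpos s v (σ i) i)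
  rw [Finset.sum_congr rfl (fun σ _ => key σ)]
  have h2 : ∑ σ : Equiv.Perm (Fin g), Equiv.Perm.sign σ •
      ∏ i : Fin g, ((if (i : ℕ) < k then v i else 1) * (yt k n s i) ^ ((σ i : ℕ)))
      = Matrix.det (Matrix.of fun p j : Fin g => (if (j : ℕ) < k then v j else 1) * (yt k n s j) ^ (p : ℕ)) := by
    rw [Matrix.det_apply]
    rfl
  rw [h2, Matrix.det_mul_row (v := fun j : Fin g => if (j : ℕ) < k then v j else 1)
    (A := fun p j : Fin g => yt k n s j ^ (p : ℕ)), vdm_eq_det']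
  congr 1
  rw [Finset.prod_ite, Finset.prod_const_one, mul_one]


lemma PP_natDegree_le (k : ℕ) (n : Fin g → ℕ) (s v : Fin g → ℂ) :
    (PP k n s v).natDegree ≤ Nk k n := by
  rw [PP, Matrix.det_apply]
  apply Polynomial.natDegree_sum_le_of_forall_le
  intro σ _
  rw [Units.smul_def, zsmul_eq_mul]
  refine le_trans Polynomial.natDegree_mul_le ?_
  rw [Polynomial.natDegree_intCast, zero_add]
  refine le_trans (Polynomial.natDegree_prod_le _ _) ?_
  rw [← sum_dd k n]
  exact Finset.sum_le_sum (fun i _ => colMat_natDegree_le k n s v (σ i) i)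

end TauAux

namespace TauAux

variable {g : ℕ}

def Valid (k : ℕ) (s : Fin g → ℂ) : Prop :=
  ∀ j : Fin g, k ≤ (j : ℕ) → s j = 1 ∨ s j = -1

lemma xt_signs {k : ℕ} {n : Fin g → ℕ} {s : Fin g → ℂ} (hs : Valid k s) (j : Fin g) :
    xt k n s j = (n j : ℂ) ∨ xt k n s j = -(n j : ℂ) := by
  unfold xt
  by_cases hj : (j : ℕ) < k
  · simp [hj]
  · rcases hs j (le_of_not_gt hj) with h | h <;> simp [hj, h]

lemma yt_signs {k : ℕ} {n : Fin g → ℕ} {s : Fin g → ℂ} (hs : Valid k s) (j : Fin g) :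
    yt k n s j = (n j : ℂ) ∨ yt k n s j = -(n j : ℂ) := by
  unfold yt
  by_cases hj : (j : ℕ) < k
  · simp [hj]
  · rcases hs j (le_of_not_gt hj) with h | h <;> simp [hj, h]

lemma PP_eval_zero_ne (k : ℕ) (n : Fin g → ℕ) (hmono : StrictMono n) (hpos : ∀ p, 0 < n p)
    {s : Fin g → ℂ} (hs : Valid k s) (v : Fin g → ℂ) :
    (PP k n s v).eval 0 ≠ 0 := by
  rw [PP_eval_zero k n hpos s v]
  exact vdm_ne_zero (sign_tuple_inj n hmono hpos _ (xt_signs hs))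

lemma PP_ne_zero (k : ℕ) (n : Fin g → ℕ) (hmono : StrictMono n) (hpos : ∀ p, 0 < n p)
    {s : Fin g → ℂ} (hs : Valid k s) (v : Fin g → ℂ) :
    PP k n s v ≠ 0 := by
  intro h
  exact PP_eval_zero_ne k n hmono hpos hs v (by rw [h, Polynomial.eval_zero])

lemma PP_coeff_top_ne (k : ℕ) (n : Fin g → ℕ) (hmono : StrictMono n) (hpos : ∀ p, 0 < n p)
    {s v : Fin g → ℂ} (hs : Valid k s) (hv : ∀ j : Fin g, (j : ℕ) < k → v j ≠ 0) :
    (PP k n s v).coeff (Nk k n) ≠ 0 := by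
  rw [PP_coeff_top k n hpos s v]
  exact mul_ne_zero
    (Finset.prod_ne_zero_iff.2 fun j hj => hv j (by simpa using hj))
    (vdm_ne_zero (sign_tuple_inj n hmono hpos _ (yt_signs hs)))

lemma PP_natDegree (k : ℕ) (n : Fin g → ℕ) (hmono : StrictMono n) (hpos : ∀ p, 0 < n p)
    {s v : Fin g → ℂ} (hs : Valid k s) (hv : ∀ j : Fin g, (j : ℕ) < k → v j ≠ 0) :
    (PP k n s v).natDegree = Nk k n :=
  le_antisymm (PP_natDegree_le k n s v)
    (Polynomial.le_natDegree_of_ne_zero (PP_coeff_top_ne k n hmono hpos hs hv))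

/-- no common root implies coprime, over ℂ. -/
lemma coprime_of_no_common_root {p q : Polynomial ℂ} (hp : p ≠ 0)
    (h : ∀ α : ℂ, p.eval α = 0 → q.eval α = 0 → False) : IsCoprime p q := by
  classical
  rw [← EuclideanDomain.gcd_isUnit_iff]
  by_contra hu
  have hg0 : EuclideanDomain.gcd p q ≠ 0 := by
    intro h0
    exact hp ((EuclideanDomain.gcd_eq_zero_iff.1 h0).1)
  have hdeg : (EuclideanDomain.gcd p q).degree ≠ 0 := by
    intro hdeg
    exact hu (Polynomial.isUnit_iff_degree_eq_zero.2 hdeg)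
  obtain ⟨α, hα⟩ := IsAlgClosed.exists_root _ hdeg
  have h1 : p.eval α = 0 :=
    Polynomial.eval_eq_zero_of_dvd_of_eval_eq_zero (EuclideanDomain.gcd_dvd_left p q) hα
  have h2 : q.eval α = 0 :=
    Polynomial.eval_eq_zero_of_dvd_of_eval_eq_zero (EuclideanDomain.gcd_dvd_right p q) hα
  exact h α h1 h2

lemma no_common_root_of_coprime {p q : Polynomial ℂ} (h : IsCoprime p q) {α : ℂ}
    (hp : p.eval α = 0) (hq : q.eval α = 0) : False := by
  obtain ⟨a, b, hab⟩ := h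
  have := congrArg (Polynomial.eval α) hab
  simp [hp, hq] at this

end TauAux

namespace TauAux

variable {g : ℕ}

lemma prod_neg' {ι : Type*} (s : Finset ι) (f : ι → ℂ) :
    ∏ i ∈ s, (-f i) = (-1) ^ s.card * ∏ i ∈ s, f i := by
  calc ∏ i ∈ s, (-f i) = ∏ i ∈ s, ((-1) * f i) := by simp only [neg_one_mul]
    _ = (∏ _i ∈ s, (-1 : ℂ)) * ∏ i ∈ s, f i := Finset.prod_mul_distrib
    _ = (-1) ^ s.card * ∏ i ∈ s, f i := by rw [Finset.prod_const]

noncomputable def RR (x : Fin g → ℂ) (j : Fin g) : ℂ :=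
  ∏ p ∈ Finset.univ.erase j, ∏ q ∈ (Finset.Ioi p).erase j, (x q - x p)

lemma RR_ne_zero {x : Fin g → ℂ} {j : Fin g}
    (hinj : ∀ p q : Fin g, p ≠ j → q ≠ j → p ≠ q → x p ≠ x q) : RR x j ≠ 0 := by
  apply Finset.prod_ne_zero_iff.2
  intro p hp
  apply Finset.prod_ne_zero_iff.2
  intro q hq
  have hpj : p ≠ j := (Finset.mem_erase.1 hp).1
  have hqj : q ≠ j := (Finset.mem_erase.1 hq).1
  have hqp : q ≠ p := ne_of_gt (Finset.mem_Ioi.1 (Finset.mem_erase.1 hq).2)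
  exact sub_ne_zero.2 (hinj q p hqj hpj hqp)

lemma vdm_update (x : Fin g → ℂ) (j : Fin g) (b : ℂ) :
    vdm (Function.update x j b) =
      (∏ q ∈ Finset.Ioi j, (x q - b)) * ((∏ p ∈ Finset.Iio j, (b - x p)) * RR x j) := by
  unfold vdm RR
  rw [← Finset.mul_prod_erase Finset.univ _ (Finset.mem_univ j)]
  congr 1
  · apply Finset.prod_congr rfl
    intro q hq
    have hq' : q ≠ j := ne_of_gt (Finset.mem_Ioi.1 hq)
    rw [Function.update_of_ne hq', Function.update_self]
  · have step : ∀ p ∈ Finset.univ.erase j,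
        (∏ q ∈ Finset.Ioi p, (Function.update x j b q - Function.update x j b p))
          = (if p < j then (b - x p) else 1) * ∏ q ∈ (Finset.Ioi p).erase j, (x q - x p) := by
      intro p hp
      have hpj : p ≠ j := (Finset.mem_erase.1 hp).1
      by_cases hpj' : p < j
      · have hjIoi : j ∈ Finset.Ioi p := Finset.mem_Ioi.2 hpj'
        rw [← Finset.mul_prod_erase _ _ hjIoi, Function.update_self, Function.update_of_ne hpj,
          if_pos hpj']
        congr 1
        refine Finset.prod_congr rfl fun q hq => ?_
        have hq' : q ≠ j := (Finset.mem_erase.1 hq).1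
        rw [Function.update_of_ne hq']
      · have hjIoi : j ∉ Finset.Ioi p := by
          simp only [Finset.mem_Ioi]
          exact hpj'
        rw [if_neg hpj', one_mul, Finset.erase_eq_of_notMem hjIoi]
        apply Finset.prod_congr rfl
        intro q hq
        have hq' : q ≠ j := by
          rintro rfl
          exact hpj' (Finset.mem_Ioi.1 hq)
        rw [Function.update_of_ne hq', Function.update_of_ne hpj]
    rw [Finset.prod_congr rfl step, Finset.prod_mul_distrib]
    congr 1
    rw [Finset.prod_ite, Finset.prod_const_one, mul_one]
    apply Finset.prod_congr
    · ext p
      simp only [Finset.mem_filter, Finset.mem_erase, Finset.mem_univ, true_and, Finset.mem_Iio,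
        and_true]
      exact ⟨fun h => h.2, fun h => ⟨ne_of_lt h, h⟩⟩
    · intro p _
      rfl

end TauAux

namespace TauAux

variable {g : ℕ}

lemma erase_eq_Iio_union_Ioi (j : Fin g) :
    Finset.univ.erase j = Finset.Iio j ∪ Finset.Ioi j := by
  ext q
  simp only [Finset.mem_erase, Finset.mem_univ, and_true, Finset.mem_union, Finset.mem_Iio,
    Finset.mem_Ioi]
  exact ne_iff_lt_or_gt

lemma vdm_update' (x : Fin g → ℂ) (j : Fin g) (b : ℂ) :
    vdm (Function.update x j b) =
      (-1) ^ (Finset.Ioi j).card * (∏ q ∈ Finset.univ.erase j, (b - x q)) * RR x j := by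
  rw [vdm_update]
  have h1 : ∏ q ∈ Finset.Ioi j, (x q - b) = (-1) ^ (Finset.Ioi j).card * ∏ q ∈ Finset.Ioi j, (b - x q) := by
    rw [← prod_neg']
    apply Finset.prod_congr rfl
    intro q _
    ring
  have h2 : ∏ q ∈ Finset.univ.erase j, (b - x q)
      = (∏ q ∈ Finset.Iio j, (b - x q)) * ∏ q ∈ Finset.Ioi j, (b - x q) := by
    rw [erase_eq_Iio_union_Ioi, Finset.prod_union]
    exact Finset.disjoint_left.2 fun a ha ha' =>
      absurd (Finset.mem_Iio.1 ha) (not_lt_of_gt (Finset.mem_Ioi.1 ha'))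
  rw [h1, h2]
  ring

/-- The key contradiction-extraction computation. -/
lemma key_products {x1 x2 : Fin g → ℂ} {j0 : Fin g} {m : ℂ} {D : Finset (Fin g)}
    (hD : j0 ∉ D)
    (h1 : ∀ q : Fin g, q ∉ D → q ≠ j0 → x2 q = x1 q)
    (h2 : ∀ q ∈ D, x2 q = -x1 q)
    (hne : ∀ q : Fin g, q ≠ j0 → x1 q ≠ m ∧ x1 q ≠ -m)
    (hinj1 : ∀ p q : Fin g, p ≠ j0 → q ≠ j0 → p ≠ q → x1 p ≠ x1 q)
    (hinj2 : ∀ p q : Fin g, p ≠ j0 → q ≠ j0 → p ≠ q → x2 p ≠ x2 q)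
    (heq : vdm (Function.update x2 j0 m) * vdm (Function.update x1 j0 (-m)) =
           vdm (Function.update x1 j0 m) * vdm (Function.update x2 j0 (-m))) :
    ∏ q ∈ D, (m - x1 q) ^ 2 = ∏ q ∈ D, (m + x1 q) ^ 2 := by
  have hDsub : D ⊆ Finset.univ.erase j0 := fun q hq =>
    Finset.mem_erase.2 ⟨fun h => hD (h ▸ hq), Finset.mem_univ q⟩
  set c := (Finset.Ioi j0).card with hc
  set R1 := RR x1 j0 with hR1
  set R2 := RR x2 j0 with hR2
  have hR1ne : R1 ≠ 0 := RR_ne_zero hinj1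
  have hR2ne : R2 ≠ 0 := RR_ne_zero hinj2
  -- write M i t
  have expand : ∀ (x : Fin g → ℂ) (t : ℂ),
      ∏ q ∈ Finset.univ.erase j0, (t - x q)
        = (∏ q ∈ (Finset.univ.erase j0) \ D, (t - x q)) * ∏ q ∈ D, (t - x q) :=
    fun x t => (Finset.prod_sdiff hDsub).symm
  have hsplit2 : ∀ t : ℂ, ∏ q ∈ Finset.univ.erase j0, (t - x2 q)
      = (∏ q ∈ (Finset.univ.erase j0) \ D, (t - x1 q)) * ∏ q ∈ D, (t + x1 q) := by
    intro t
    rw [expand x2 t]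
    congr 1
    · apply Finset.prod_congr rfl
      intro q hq
      rw [h1 q (Finset.mem_sdiff.1 hq).2 (Finset.mem_erase.1 (Finset.mem_sdiff.1 hq).1).1]
    · apply Finset.prod_congr rfl
      intro q hq
      rw [h2 q hq]
      ring
  have hsplit1 : ∀ t : ℂ, ∏ q ∈ Finset.univ.erase j0, (t - x1 q)
      = (∏ q ∈ (Finset.univ.erase j0) \ D, (t - x1 q)) * ∏ q ∈ D, (t - x1 q) :=
    fun t => expand x1 t
  have hW : ∀ t : ℂ, (t = m ∨ t = -m) → (∏ q ∈ (Finset.univ.erase j0) \ D, (t - x1 q)) ≠ 0 := by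
    intro t ht
    apply Finset.prod_ne_zero_iff.2
    intro q hq
    have hqj : q ≠ j0 := (Finset.mem_erase.1 (Finset.mem_sdiff.1 hq).1).1
    rcases ht with rfl | rfl
    · exact sub_ne_zero.2 fun h => (hne q hqj).1 h.symm
    · exact sub_ne_zero.2 fun h => (hne q hqj).2 h.symm
  -- rewrite the four vdm's
  rw [vdm_update' x2 j0 m, vdm_update' x1 j0 (-m), vdm_update' x1 j0 m, vdm_update' x2 j0 (-m)]
    at heq
  rw [hsplit2 m, hsplit2 (-m), hsplit1 m, hsplit1 (-m)] at heq
  -- cancel signs and R's and W's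
  set W1 := ∏ q ∈ (Finset.univ.erase j0) \ D, (m - x1 q) with hW1
  set W2 := ∏ q ∈ (Finset.univ.erase j0) \ D, (-m - x1 q) with hW2
  have hW1ne : W1 ≠ 0 := hW m (Or.inl rfl)
  have hW2ne : W2 ≠ 0 := hW (-m) (Or.inr rfl)
  have hsgn : ((-1 : ℂ) ^ c) ≠ 0 := pow_ne_zero _ (neg_ne_zero.2 one_ne_zero)
  have hprod_ne : ((-1 : ℂ) ^ c * ((-1 : ℂ) ^ c * (W1 * (W2 * (R1 * R2))))) ≠ 0 :=
    mul_ne_zero hsgn (mul_ne_zero hsgn (mul_ne_zero hW1ne (mul_ne_zero hW2ne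
      (mul_ne_zero hR1ne hR2ne))))
  have hkey : (∏ q ∈ D, (m + x1 q)) * (∏ q ∈ D, (-m - x1 q))
      = (∏ q ∈ D, (m - x1 q)) * (∏ q ∈ D, (-m + x1 q)) := by
    apply mul_right_cancel₀ hprod_ne
    calc (∏ q ∈ D, (m + x1 q)) * (∏ q ∈ D, (-m - x1 q))
          * ((-1 : ℂ) ^ c * ((-1 : ℂ) ^ c * (W1 * (W2 * (R1 * R2)))))
        = (-1 : ℂ) ^ c * (W1 * ∏ q ∈ D, (m + x1 q)) * R2 *
            ((-1 : ℂ) ^ c * (W2 * ∏ q ∈ D, (-m - x1 q)) * R1) := by ring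
      _ = (-1 : ℂ) ^ c * (W1 * ∏ q ∈ D, (m - x1 q)) * R1 *
            ((-1 : ℂ) ^ c * (W2 * ∏ q ∈ D, (-m + x1 q)) * R2) := heq
      _ = (∏ q ∈ D, (m - x1 q)) * (∏ q ∈ D, (-m + x1 q))
          * ((-1 : ℂ) ^ c * ((-1 : ℂ) ^ c * (W1 * (W2 * (R1 * R2))))) := by ring
  -- convert to squares
  have e1 : (∏ q ∈ D, (-m - x1 q)) = (-1) ^ D.card * ∏ q ∈ D, (m + x1 q) := by
    rw [← prod_neg']
    apply Finset.prod_congr rfl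
    intro q _
    ring
  have e2 : (∏ q ∈ D, (-m + x1 q)) = (-1) ^ D.card * ∏ q ∈ D, (m - x1 q) := by
    rw [← prod_neg']
    apply Finset.prod_congr rfl
    intro q _
    ring
  rw [e1, e2] at hkey
  have hsgnD : ((-1 : ℂ) ^ D.card) ≠ 0 := pow_ne_zero _ (neg_ne_zero.2 one_ne_zero)
  have : (∏ q ∈ D, (m + x1 q)) * (∏ q ∈ D, (m + x1 q))
      = (∏ q ∈ D, (m - x1 q)) * (∏ q ∈ D, (m - x1 q)) := by
    apply mul_left_cancel₀ hsgnD
    linear_combination hkey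
  rw [← Finset.prod_mul_distrib] at this
  rw [← Finset.prod_mul_distrib] at this
  calc ∏ q ∈ D, (m - x1 q) ^ 2 = ∏ q ∈ D, ((m - x1 q) * (m - x1 q)) := by
        apply Finset.prod_congr rfl; intro q _; ring
    _ = ∏ q ∈ D, ((m + x1 q) * (m + x1 q)) := this.symm
    _ = ∏ q ∈ D, (m + x1 q) ^ 2 := by
        apply Finset.prod_congr rfl; intro q _; ring

end TauAux

namespace TauAux

variable {g : ℕ}

lemma PP_decomp (k : ℕ) (hk : k < g) (n : Fin g → ℕ) (s v : Fin g → ℂ) :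
    PP (k + 1) n s v
      = (C (v ⟨k, hk⟩) * X ^ (n ⟨k, hk⟩)) * PP k n (Function.update s ⟨k, hk⟩ 1) v
        + PP k n (Function.update s ⟨k, hk⟩ (-1)) v := by
  set κ : Fin g := ⟨k, hk⟩ with hκ
  set M := colMat k n (Function.update s κ 1) v with hM
  have hlt : (κ : ℕ) < k + 1 := Nat.lt_succ_self k
  have hnlt : ¬ ((κ : ℕ) < k) := Nat.lt_irrefl k
  have hcol : colMat (k + 1) n s v = M.updateCol κ
      (((C (v κ) * X ^ (n κ)) • (fun p' : Fin g => C ((n κ : ℂ) ^ (p' : ℕ))))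
        + (fun p : Fin g => C ((-(n κ : ℂ)) ^ (p : ℕ)))) := by
    refine Matrix.ext fun p j => ?_
    rw [Matrix.updateCol_apply]
    by_cases hj : j = κ
    · rw [if_pos hj, hj]
      simp only [colMat, hlt, if_true, Pi.add_apply, Pi.smul_apply, smul_eq_mul]
      rw [Polynomial.C_mul]
      ring
    · rw [if_neg hj]
      have hjk : ((j : ℕ) < k + 1) ↔ ((j : ℕ) < k) := by
        constructor
        · intro h
          rcases Nat.lt_succ_iff_lt_or_eq.1 h with h' | h'
          · exact h'
          · exact absurd (Fin.ext h' : j = κ) hj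
        · omega
      simp only [colMat, hM]
      by_cases h2 : (j : ℕ) < k
      · rw [if_pos (hjk.2 h2), if_pos h2]
      · rw [if_neg (fun hh => h2 (hjk.1 hh)), if_neg h2,
          Function.update_of_ne hj]
  rw [PP, hcol, Matrix.det_updateCol_add, Matrix.det_updateCol_smul]
  congr 1
  · congr 1
    have hMeq : M.updateCol κ (fun p' : Fin g => C ((n κ : ℂ) ^ (p' : ℕ))) = M := by
      refine Matrix.ext fun p j => ?_
      rw [Matrix.updateCol_apply]
      by_cases hj : j = κ
      · rw [if_pos hj, hj]
        simp only [colMat, hM, hnlt, if_false]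
        rw [Function.update_self, one_mul]
      · rw [if_neg hj]
    rw [hMeq]
    rfl
  · have hMeq : M.updateCol κ (fun p : Fin g => C ((-(n κ : ℂ)) ^ (p : ℕ)))
        = colMat k n (Function.update s κ (-1)) v := by
      refine Matrix.ext fun p j => ?_
      rw [Matrix.updateCol_apply]
      by_cases hj : j = κ
      · rw [if_pos hj, hj]
        simp only [colMat, hnlt, if_false]
        rw [Function.update_self]
        norm_num
      · rw [if_neg hj]
        simp only [colMat, hM]
        by_cases h2 : (j : ℕ) < k
        · rw [if_pos h2, if_pos h2]
        · rw [if_neg h2, if_neg h2, Function.update_of_ne hj, Function.update_of_ne hj]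
    rw [hMeq]
    rfl

end TauAux

namespace TauAux

variable {g : ℕ}

noncomputable def sgnB (b : Fin g → Bool) : Fin g → ℂ := fun j => if b j then 1 else -1

lemma sgnB_pm (b : Fin g → Bool) (j : Fin g) : sgnB b j = 1 ∨ sgnB b j = -1 := by
  unfold sgnB
  by_cases h : b j <;> simp [h]

noncomputable def Dset (k : ℕ) (s t : Fin g → ℂ) : Finset (Fin g) := by
  classical
  exact Finset.univ.filter (fun j : Fin g => k ≤ (j : ℕ) ∧ s j ≠ t j)

def Nondeg (n : Fin g → ℕ) (k : ℕ) (s t : Fin g → ℂ) : Prop :=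
  ∃ i : Fin g, (i : ℕ) < k ∧
    ∏ j ∈ Dset k s t, ((n i : ℂ) - s j * n j) ^ 2
      ≠ ∏ j ∈ Dset k s t, ((n i : ℂ) + s j * n j) ^ 2

lemma sq_sub_ne_sq_add {a b : ℂ} (ha : a ≠ 0) (hb : b ≠ 0) : (a - b) ^ 2 ≠ (a + b) ^ 2 := by
  intro h
  have h4 : (4 : ℂ) * (a * b) = 0 := by linear_combination -h
  rcases mul_eq_zero.1 h4 with h' | h'
  · norm_num at h'
  · exact mul_ne_zero ha hb h'

lemma cast_n_ne_zero (n : Fin g → ℕ) (hpos : ∀ p, 0 < n p) (j : Fin g) : ((n j : ℂ)) ≠ 0 := by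
  simpa using (Nat.pos_iff_ne_zero.1 (hpos j))

lemma PP_zero_eq_C (n : Fin g → ℕ) (s v : Fin g → ℂ) :
    PP 0 n s v = C (vdm (xt 0 n s)) := by
  have hmat : colMat 0 n s v
      = (C : ℂ →+* Polynomial ℂ).mapMatrix (Matrix.of fun p j : Fin g => (xt 0 n s j) ^ (p : ℕ)) := by
    refine Matrix.ext fun p j => ?_
    simp [colMat, xt]
  rw [PP, hmat, ← RingHom.map_det, vdm_eq_det]

noncomputable def A0 (k : ℕ) (n : Fin g → ℕ) (v : Fin g → ℂ) (κ : Fin g)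
    (b : Fin g → Bool) : Polynomial ℂ :=
  PP k n (Function.update (sgnB b) κ 1) v

noncomputable def Bq (k : ℕ) (n : Fin g → ℕ) (v : Fin g → ℂ) (κ : Fin g)
    (b : Fin g → Bool) : Polynomial ℂ :=
  PP k n (Function.update (sgnB b) κ (-1)) v

noncomputable def Aq (k : ℕ) (n : Fin g → ℕ) (v : Fin g → ℂ) (κ : Fin g)
    (b : Fin g → Bool) : Polynomial ℂ :=
  X ^ (n κ) * A0 k n v κ b

noncomputable def Wq (k : ℕ) (n : Fin g → ℕ) (v : Fin g → ℂ) (κ : Fin g)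
    (b : Fin g → Bool) : Polynomial ℂ :=
  Aq k n v κ b * derivative (Bq k n v κ b) - derivative (Aq k n v κ b) * Bq k n v κ b

noncomputable def Vq (k : ℕ) (n : Fin g → ℕ) (v : Fin g → ℂ) (κ : Fin g)
    (b c : Fin g → Bool) : Polynomial ℂ :=
  Aq k n v κ b * Bq k n v κ c - Aq k n v κ c * Bq k n v κ b

noncomputable def badSet (P A B : Polynomial ℂ) : Finset ℂ := by
  classical
  exact P.roots.toFinset.image (fun α => -(B.eval α) / (A.eval α))

lemma mem_badSet {P A B : Polynomial ℂ} {α : ℂ} (hP : P ≠ 0) (hα : P.eval α = 0) :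
    -(B.eval α) / (A.eval α) ∈ badSet P A B := by
  classical
  unfold badSet
  refine Finset.mem_image.2 ⟨α, Multiset.mem_toFinset.2 (Polynomial.mem_roots'.2 ⟨hP, hα⟩), ?_⟩
  simp

/-- The main inductive construction. -/
lemma main_induction (n : Fin g → ℕ) (hmono : StrictMono n) (hpos : ∀ p, 0 < n p) :
    ∀ k : ℕ, k ≤ g → ∃ v : Fin g → ℂ,
      (∀ j : Fin g, (j : ℕ) < k → v j ≠ 0) ∧
      (∀ s : Fin g → ℂ, Valid k s → (PP k n s v).Separable) ∧
      (∀ s t : Fin g → ℂ, Valid k s → Valid k t → Nondeg n k s t →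
        IsCoprime (PP k n s v) (PP k n t v)) := by
  intro k
  induction k with
  | zero =>
      intro _
      refine ⟨fun _ => 1, fun j hj => absurd hj (by omega), ?_, ?_⟩
      · intro s hs
        rw [PP_zero_eq_C]
        have hu : IsUnit (C (vdm (xt 0 n s)) : Polynomial ℂ) :=
          Polynomial.isUnit_C.2
            (Ne.isUnit (vdm_ne_zero (sign_tuple_inj n hmono hpos _ (xt_signs hs))))
        rw [Polynomial.Separable, Polynomial.derivative_C]
        exact isCoprime_zero_right.2 hu
      · intro s t hs ht _
        rw [PP_zero_eq_C, PP_zero_eq_C]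
        have hu : IsUnit (C (vdm (xt 0 n s)) : Polynomial ℂ) :=
          Polynomial.isUnit_C.2
            (Ne.isUnit (vdm_ne_zero (sign_tuple_inj n hmono hpos _ (xt_signs hs))))
        exact (isCoprime_zero_right.2 hu).of_isCoprime_of_dvd_right (dvd_zero _) |>.symm |>.symm
  | succ k IH =>
      intro hk1
      classical
      have hk : k < g := hk1
      obtain ⟨v, hv, hSep, hCop⟩ := IH (Nat.le_of_succ_le hk1)
      set κ : Fin g := ⟨k, hk⟩ with hκdef
      have hκ : (κ : ℕ) = k := rfl
      set bigBad : Finset ℂ := insert 0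
        ((Finset.univ.biUnion fun b : Fin g → Bool =>
            badSet (Wq k n v κ b) (Aq k n v κ b) (Bq k n v κ b)) ∪
         (Finset.univ.biUnion fun bc : (Fin g → Bool) × (Fin g → Bool) =>
            badSet (Vq k n v κ bc.1 bc.2) (Aq k n v κ bc.1) (Bq k n v κ bc.1))) with hbig
      obtain ⟨w, hw⟩ := Infinite.exists_notMem_finset bigBad
      have hw0 : w ≠ 0 := fun h => hw (by rw [hbig, h]; exact Finset.mem_insert_self 0 _)
      have hwW : ∀ b : Fin g → Bool,
          w ∉ badSet (Wq k n v κ b) (Aq k n v κ b) (Bq k n v κ b) := by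
        intro b hmem
        exact hw (by
          rw [hbig]
          exact Finset.mem_insert_of_mem (Finset.mem_union_left _
            (Finset.mem_biUnion.2 ⟨b, Finset.mem_univ b, hmem⟩)))
      have hwV : ∀ b c : Fin g → Bool,
          w ∉ badSet (Vq k n v κ b c) (Aq k n v κ b) (Bq k n v κ b) := by
        intro b c hmem
        exact hw (by
          rw [hbig]
          exact Finset.mem_insert_of_mem (Finset.mem_union_right _
            (Finset.mem_biUnion.2 ⟨(b, c), Finset.mem_univ _, hmem⟩)))
      have hvalid_upd : ∀ (b : Fin g → Bool) (c : ℂ), (c = 1 ∨ c = -1) →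
          Valid k (Function.update (sgnB b) κ c) := by
        intro b c hc j hj
        by_cases hjκ : j = κ
        · rw [hjκ, Function.update_self]; exact hc
        · rw [Function.update_of_ne hjκ]; exact sgnB_pm b j
      have hA0ne : ∀ b, A0 k n v κ b ≠ 0 :=
        fun b => PP_ne_zero k n hmono hpos (hvalid_upd b 1 (Or.inl rfl)) v
      have hBne : ∀ b, Bq k n v κ b ≠ 0 :=
        fun b => PP_ne_zero k n hmono hpos (hvalid_upd b (-1) (Or.inr rfl)) v
      have hB0 : ∀ b, (Bq k n v κ b).eval 0 ≠ 0 :=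
        fun b => PP_eval_zero_ne k n hmono hpos (hvalid_upd b (-1) (Or.inr rfl)) v
      have hA00 : ∀ b, (A0 k n v κ b).eval 0 ≠ 0 :=
        fun b => PP_eval_zero_ne k n hmono hpos (hvalid_upd b 1 (Or.inl rfl)) v
      have hApne : ∀ b, Aq k n v κ b ≠ 0 :=
        fun b => mul_ne_zero (pow_ne_zero _ Polynomial.X_ne_zero) (hA0ne b)
      have hg0 : 0 < g := lt_of_le_of_lt (Nat.zero_le k) hk
      have hA0B : ∀ b, IsCoprime (A0 k n v κ b) (Bq k n v κ b) := by
        intro b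
        rcases Nat.eq_zero_or_pos k with hk0 | hkpos
        · unfold A0 Bq
          subst hk0
          rw [PP_zero_eq_C, PP_zero_eq_C]
          refine IsCoprime.of_isCoprime_of_dvd_right (isCoprime_zero_right.2 ?_) (dvd_zero _)
          exact Polynomial.isUnit_C.2 (Ne.isUnit (vdm_ne_zero (sign_tuple_inj n hmono hpos _
            (xt_signs (hvalid_upd b 1 (Or.inl rfl))))))
        · apply hCop _ _ (hvalid_upd b 1 (Or.inl rfl)) (hvalid_upd b (-1) (Or.inr rfl))
          refine ⟨⟨0, hg0⟩, by simpa using hkpos, ?_⟩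
          have hD : Dset k (Function.update (sgnB b) κ 1) (Function.update (sgnB b) κ (-1))
              = {κ} := by
            ext j
            simp only [Dset, Finset.mem_filter, Finset.mem_univ, true_and, Finset.mem_singleton]
            constructor
            · rintro ⟨hj1, hj2⟩
              by_contra hjκ
              rw [Function.update_of_ne hjκ, Function.update_of_ne hjκ] at hj2
              exact hj2 rfl
            · rintro rfl
              refine ⟨le_of_eq hκ.symm, ?_⟩
              rw [Function.update_self, Function.update_self]
              norm_num
          rw [hD, Finset.prod_singleton, Finset.prod_singleton, Function.update_self, one_mul]
          exact sq_sub_ne_sq_add (cast_n_ne_zero n hpos _) (cast_n_ne_zero n hpos _)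
      have hApB : ∀ b, IsCoprime (Aq k n v κ b) (Bq k n v κ b) := by
        intro b
        unfold Aq
        refine IsCoprime.mul_left ?_ (hA0B b)
        refine coprime_of_no_common_root (pow_ne_zero _ Polynomial.X_ne_zero) ?_
        intro α h1 h2
        have hα0 : α = 0 := by
          rw [Polynomial.eval_pow, Polynomial.eval_X] at h1
          exact pow_eq_zero_iff (Nat.pos_iff_ne_zero.1 (hpos κ)) |>.1 h1
        rw [hα0] at h2
        exact hB0 b h2
      have hndA0 : ∀ b, (A0 k n v κ b).natDegree = Nk k n :=
        fun b => PP_natDegree k n hmono hpos (hvalid_upd b 1 (Or.inl rfl)) hv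
      have hndAp : ∀ b, (Aq k n v κ b).natDegree = n κ + Nk k n := by
        intro b
        unfold Aq
        rw [Polynomial.natDegree_mul (pow_ne_zero _ Polynomial.X_ne_zero) (hA0ne b),
          Polynomial.natDegree_X_pow, hndA0 b]
      have hndAp_pos : ∀ b, (Aq k n v κ b).natDegree ≠ 0 := by
        intro b
        rw [hndAp b]
        have := hpos κ
        omega
      have hWne : ∀ b, Wq k n v κ b ≠ 0 := by
        intro b hW0
        unfold Wq at hW0
        have hAB : Aq k n v κ b * derivative (Bq k n v κ b)
            = derivative (Aq k n v κ b) * Bq k n v κ b := sub_eq_zero.1 hW0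
        have hdvd : Aq k n v κ b ∣ derivative (Aq k n v κ b) :=
          (hApB b).dvd_of_dvd_mul_right ⟨derivative (Bq k n v κ b), hAB.symm⟩
        by_cases hA' : derivative (Aq k n v κ b) = 0
        · exact hndAp_pos b (Polynomial.natDegree_eq_zero_of_derivative_eq_zero hA')
        · have h1 := Polynomial.natDegree_le_of_dvd hdvd hA'
          have h2 := Polynomial.natDegree_derivative_lt (hndAp_pos b)
          omega
      have hdecomp : ∀ (s : Fin g → ℂ) (b : Fin g → Bool),
          (∀ j : Fin g, k + 1 ≤ (j : ℕ) → sgnB b j = s j) →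
          PP (k + 1) n s (Function.update v κ w) = C w * Aq k n v κ b + Bq k n v κ b := by
        intro s b hb
        rw [PP_decomp k hk n s (Function.update v κ w)]
        have hupdv : ∀ j : Fin g, (j : ℕ) < k → Function.update v κ w j = v j := by
          intro j hj
          refine Function.update_of_ne (fun h => ?_) _ _
          rw [h, hκ] at hj
          omega
        have hge : ∀ j : Fin g, k ≤ (j : ℕ) → j ≠ κ → k + 1 ≤ (j : ℕ) := by
          intro j hj hjκ
          rcases Nat.lt_or_ge (j : ℕ) (k + 1) with h | h
          · exact absurd (Fin.ext (by omega : (j : ℕ) = (κ : ℕ))) hjκ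
          · exact h
        have e1 : PP k n (Function.update s ⟨k, hk⟩ 1) (Function.update v κ w)
            = A0 k n v κ b := by
          unfold A0
          apply PP_congr
          · intro j hj
            by_cases hjκ : j = κ
            · rw [hjκ]
              rw [Function.update_self, Function.update_self]
            · rw [Function.update_of_ne hjκ, Function.update_of_ne hjκ]
              exact (hb j (hge j hj hjκ)).symm
          · exact hupdv
        have e2 : PP k n (Function.update s ⟨k, hk⟩ (-1)) (Function.update v κ w)
            = Bq k n v κ b := by
          unfold Bq
          apply PP_congr
          · intro j hj
            by_cases hjκ : j = κ
            · rw [hjκ]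
              rw [Function.update_self, Function.update_self]
            · rw [Function.update_of_ne hjκ, Function.update_of_ne hjκ]
              exact (hb j (hge j hj hjκ)).symm
          · exact hupdv
        rw [e1, e2]
        have hvw : Function.update v κ w ⟨k, hk⟩ = w := Function.update_self _ _ _
        rw [hvw]
        unfold Aq
        ring
      have hcanon : ∀ s : Fin g → ℂ, Valid (k + 1) s →
          ∃ b : Fin g → Bool, ∀ j : Fin g, k + 1 ≤ (j : ℕ) → sgnB b j = s j := by
        intro s hs
        refine ⟨fun j => decide (s j = 1), fun j hj => ?_⟩
        rcases hs j hj with h | h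
        · simp [sgnB, h]
        · have hne : s j ≠ 1 := by
            rw [h]
            norm_num
          have hb : (decide (s j = 1)) = false := decide_eq_false hne
          show (if (decide (s j = 1) : Bool) then (1 : ℂ) else -1) = s j
          rw [hb, h]
          simp
      have hroot : ∀ (b : Fin g → Bool) (α : ℂ),
          (C w * Aq k n v κ b + Bq k n v κ b).eval α = 0 →
          α ≠ 0 ∧ (Aq k n v κ b).eval α ≠ 0 := by
        intro b α hα
        rw [Polynomial.eval_add, Polynomial.eval_mul, Polynomial.eval_C] at hα
        have hα0 : α ≠ 0 := by
          intro h0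
          rw [h0] at hα
          have hA0ev : (Aq k n v κ b).eval 0 = 0 := by
            unfold Aq
            rw [Polynomial.eval_mul, Polynomial.eval_pow, Polynomial.eval_X,
              zero_pow (Nat.pos_iff_ne_zero.1 (hpos κ)), zero_mul]
          rw [hA0ev, mul_zero, zero_add] at hα
          exact hB0 b hα
        refine ⟨hα0, fun hA => ?_⟩
        have hA0α : (A0 k n v κ b).eval α = 0 := by
          have := hA
          unfold Aq at this
          rw [Polynomial.eval_mul, Polynomial.eval_pow, Polynomial.eval_X] at this
          rcases mul_eq_zero.1 this with h | h
          · exact absurd (pow_eq_zero_iff (Nat.pos_iff_ne_zero.1 (hpos κ)) |>.1 h) hα0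
          · exact h
        rw [hA, mul_zero, zero_add] at hα
        exact no_common_root_of_coprime (hA0B b) hA0α hα
      refine ⟨Function.update v κ w, ?_, ?_, ?_⟩
      · intro j hj
        by_cases hjκ : j = κ
        · rw [hjκ, Function.update_self]; exact hw0
        · rw [Function.update_of_ne hjκ]
          apply hv
          have : (j : ℕ) ≠ k := fun h => hjκ (Fin.ext (h.trans hκ.symm))
          omega
      · -- Separable
        intro s hs
        obtain ⟨b, hb⟩ := hcanon s hs
        have hPdef := hdecomp s b hb
        rw [Polynomial.Separable]
        refine coprime_of_no_common_root (PP_ne_zero (k + 1) n hmono hpos hs _) ?_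
        intro α h1 h2
        rw [hPdef] at h1
        rw [hPdef, Polynomial.derivative_add, Polynomial.derivative_C_mul] at h2
        obtain ⟨hα0, hAα⟩ := hroot b α h1
        rw [Polynomial.eval_add, Polynomial.eval_mul, Polynomial.eval_C] at h1 h2
        have hWα : (Wq k n v κ b).eval α = 0 := by
          unfold Wq
          rw [Polynomial.eval_sub, Polynomial.eval_mul, Polynomial.eval_mul]
          linear_combination (Polynomial.eval α (Aq k n v κ b)) * h2
            - (Polynomial.eval α (derivative (Aq k n v κ b))) * h1
        have hweq : w = -(Bq k n v κ b).eval α / (Aq k n v κ b).eval α := by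
          rw [eq_div_iff hAα]
          linear_combination h1
        exact hwW b (hweq ▸ mem_badSet (hWne b) hWα)
      · -- coprimality
        intro s t hs ht hnd
        obtain ⟨b1, hb1⟩ := hcanon s hs
        obtain ⟨b2, hb2⟩ := hcanon t ht
        have hP1 := hdecomp s b1 hb1
        have hP2 := hdecomp t b2 hb2
        refine coprime_of_no_common_root (PP_ne_zero (k + 1) n hmono hpos hs _) ?_
        intro α h1 h2
        rw [hP1] at h1
        rw [hP2] at h2
        obtain ⟨hα0, hA1α⟩ := hroot b1 α h1
        obtain ⟨-, hA2α⟩ := hroot b2 α h2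
        rw [Polynomial.eval_add, Polynomial.eval_mul, Polynomial.eval_C] at h1 h2
        have hVα : (Vq k n v κ b1 b2).eval α = 0 := by
          unfold Vq
          rw [Polynomial.eval_sub, Polynomial.eval_mul, Polynomial.eval_mul]
          linear_combination (Polynomial.eval α (Aq k n v κ b1)) * h2
            - (Polynomial.eval α (Aq k n v κ b2)) * h1
        by_cases hV : Vq k n v κ b1 b2 = 0
        swap
        · have hweq : w = -(Bq k n v κ b1).eval α / (Aq k n v κ b1).eval α := by
            rw [eq_div_iff hA1α]
            linear_combination h1
          exact hwV b1 b2 (hweq ▸ mem_badSet hV hVα)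
        · -- proportionality case
          unfold Vq at hV
          have hprop : Aq k n v κ b1 * Bq k n v κ b2 = Aq k n v κ b2 * Bq k n v κ b1 :=
            sub_eq_zero.1 hV
          have hdvd : Aq k n v κ b1 ∣ Aq k n v κ b2 :=
            (hApB b1).dvd_of_dvd_mul_right ⟨Bq k n v κ b2, hprop.symm⟩
          obtain ⟨q, hq⟩ := hdvd
          have hqne : q ≠ 0 := by
            rintro rfl
            rw [mul_zero] at hq
            exact hApne b2 hq
          have hndq : q.natDegree = 0 := by
            have hnd2 := Polynomial.natDegree_mul (hApne b1) hqne
            rw [← hq, hndAp b1, hndAp b2] at hnd2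
            omega
          obtain ⟨c, hc⟩ := Polynomial.natDegree_eq_zero.1 hndq
          have hcne : c ≠ 0 := by
            rintro rfl
            rw [map_zero] at hc
            exact hqne hc.symm
          have hA0prop : A0 k n v κ b2 = A0 k n v κ b1 * C c := by
            have hXne : (X : Polynomial ℂ) ^ (n κ) ≠ 0 := pow_ne_zero _ Polynomial.X_ne_zero
            apply mul_left_cancel₀ hXne
            calc X ^ (n κ) * A0 k n v κ b2 = Aq k n v κ b2 := rfl
              _ = Aq k n v κ b1 * q := hq
              _ = (X ^ (n κ) * A0 k n v κ b1) * C c := by rw [hc]; rfl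
              _ = X ^ (n κ) * (A0 k n v κ b1 * C c) := by ring
          have hBprop : Bq k n v κ b2 = Bq k n v κ b1 * C c := by
            apply mul_left_cancel₀ (hApne b1)
            calc Aq k n v κ b1 * Bq k n v κ b2 = Aq k n v κ b2 * Bq k n v κ b1 := hprop
              _ = (Aq k n v κ b1 * q) * Bq k n v κ b1 := by rw [hq]
              _ = Aq k n v κ b1 * (Bq k n v κ b1 * C c) := by rw [← hc]; ring
          obtain ⟨i, hik, hprod⟩ := hnd
          have hDval : ∀ j ∈ Dset (k + 1) s t, k + 1 ≤ (j : ℕ) ∧ s j ≠ t j := by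
            intro j hj
            simpa [Dset] using hj
          rcases Nat.lt_succ_iff_lt_or_eq.1 hik with hik' | hik'
          · -- i < k : children coprime, contradiction with proportionality
            have hDeq : Dset k (Function.update (sgnB b1) κ 1) (Function.update (sgnB b2) κ 1)
                = Dset (k + 1) s t := by
              ext j
              simp only [Dset, Finset.mem_filter, Finset.mem_univ, true_and]
              constructor
              · rintro ⟨hj1, hj2⟩
                have hjκ : j ≠ κ := by
                  rintro rfl
                  rw [Function.update_self, Function.update_self] at hj2
                  exact hj2 rfl
                rw [Function.update_of_ne hjκ, Function.update_of_ne hjκ] at hj2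
                have hjk1 : k + 1 ≤ (j : ℕ) := by
                  rcases Nat.lt_or_ge (j : ℕ) (k + 1) with h | h
                  · exact absurd (Fin.ext (by omega : (j : ℕ) = (κ : ℕ))) hjκ
                  · exact h
                refine ⟨hjk1, ?_⟩
                rw [← hb1 j hjk1, ← hb2 j hjk1]
                exact hj2
              · rintro ⟨hj1, hj2⟩
                have hjκ : j ≠ κ := by
                  rintro rfl
                  rw [hκ] at hj1
                  omega
                refine ⟨by omega, ?_⟩
                rw [Function.update_of_ne hjκ, Function.update_of_ne hjκ,
                  hb1 j hj1, hb2 j hj1]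
                exact hj2
            have hval1 : ∀ j ∈ Dset (k + 1) s t,
                Function.update (sgnB b1) κ 1 j = s j := by
              intro j hj
              have hjk1 := (hDval j hj).1
              have hjκ : j ≠ κ := by
                rintro rfl
                rw [hκ] at hjk1
                omega
              rw [Function.update_of_ne hjκ]
              exact hb1 j hjk1
            have hchild : IsCoprime (A0 k n v κ b1) (A0 k n v κ b2) := by
              apply hCop _ _ (hvalid_upd b1 1 (Or.inl rfl)) (hvalid_upd b2 1 (Or.inl rfl))
              refine ⟨i, hik', ?_⟩
              rw [hDeq]
              have hrw1 : ∏ j ∈ Dset (k + 1) s t,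
                  ((n i : ℂ) - Function.update (sgnB b1) κ 1 j * n j) ^ 2
                  = ∏ j ∈ Dset (k + 1) s t, ((n i : ℂ) - s j * n j) ^ 2 :=
                Finset.prod_congr rfl (fun j hj => by rw [hval1 j hj])
              have hrw2 : ∏ j ∈ Dset (k + 1) s t,
                  ((n i : ℂ) + Function.update (sgnB b1) κ 1 j * n j) ^ 2
                  = ∏ j ∈ Dset (k + 1) s t, ((n i : ℂ) + s j * n j) ^ 2 :=
                Finset.prod_congr rfl (fun j hj => by rw [hval1 j hj])
              rw [hrw1, hrw2]
              exact hprod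
            have hunit : IsUnit (A0 k n v κ b1) :=
              hchild.isUnit_of_dvd' dvd_rfl ⟨C c, hA0prop⟩
            have hdeg0 := Polynomial.natDegree_eq_zero_of_isUnit hunit
            rw [hndA0 b1] at hdeg0
            have hNkpos : 0 < Nk k n := by
              have hmem : (⟨0, hg0⟩ : Fin g) ∈ Finset.univ.filter
                  (fun j : Fin g => (j : ℕ) < k) := by
                simp only [Finset.mem_filter, Finset.mem_univ, true_and]
                exact Nat.lt_of_le_of_lt (Nat.zero_le _) hik'
              calc 0 < n ⟨0, hg0⟩ := hpos _
                _ ≤ Nk k n := Finset.single_le_sum (fun i _ => Nat.zero_le _) hmem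
            omega
          · -- i = κ : vandermonde contradiction via key_products
            have hiκ : i = κ := Fin.ext (by rw [hκ]; exact hik')
            have hvalsgn : ∀ b : Fin g → Bool, Valid k (sgnB b) := fun b j _ => sgnB_pm b j
            have hxtupd : ∀ (σ : Fin g → ℂ) (c' : ℂ),
                xt k n (Function.update σ κ c') = Function.update (xt k n σ) κ (c' * n κ) := by
              intro σ c'
              funext j
              by_cases hjκ : j = κ
              · rw [hjκ, Function.update_self]
                unfold xt
                rw [if_neg (by rw [hκ]; omega), Function.update_self]
              · rw [Function.update_of_ne hjκ]
                unfold xt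
                by_cases hjk : (j : ℕ) < k
                · rw [if_pos hjk, if_pos hjk]
                · rw [if_neg hjk, if_neg hjk, Function.update_of_ne hjκ]
            have hc1 : (A0 k n v κ b1).eval 0 = vdm (Function.update (xt k n (sgnB b1)) κ ((n κ : ℂ))) := by
              unfold A0
              rw [PP_eval_zero k n hpos, hxtupd, one_mul]
            have hc2 : (A0 k n v κ b2).eval 0 = vdm (Function.update (xt k n (sgnB b2)) κ ((n κ : ℂ))) := by
              unfold A0
              rw [PP_eval_zero k n hpos, hxtupd, one_mul]
            have hc3 : (Bq k n v κ b1).eval 0 = vdm (Function.update (xt k n (sgnB b1)) κ (-(n κ : ℂ))) := by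
              unfold Bq
              rw [PP_eval_zero k n hpos, hxtupd, neg_one_mul]
            have hc4 : (Bq k n v κ b2).eval 0 = vdm (Function.update (xt k n (sgnB b2)) κ (-(n κ : ℂ))) := by
              unfold Bq
              rw [PP_eval_zero k n hpos, hxtupd, neg_one_mul]
            have heqv : vdm (Function.update (xt k n (sgnB b2)) κ ((n κ : ℂ)))
                  * vdm (Function.update (xt k n (sgnB b1)) κ (-(n κ : ℂ)))
                = vdm (Function.update (xt k n (sgnB b1)) κ ((n κ : ℂ)))
                  * vdm (Function.update (xt k n (sgnB b2)) κ (-(n κ : ℂ))) := by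
              rw [← hc1, ← hc2, ← hc3, ← hc4]
              have ev1 : (A0 k n v κ b2).eval 0 = (A0 k n v κ b1).eval 0 * c := by
                rw [hA0prop, Polynomial.eval_mul, Polynomial.eval_C]
              have ev2 : (Bq k n v κ b2).eval 0 = (Bq k n v κ b1).eval 0 * c := by
                rw [hBprop, Polynomial.eval_mul, Polynomial.eval_C]
              rw [ev1, ev2]
              ring
            have hDκ : κ ∉ Dset (k + 1) s t := by
              intro hmem
              have := (hDval κ hmem).1
              rw [hκ] at this
              omega
            have hx1s : ∀ j : Fin g, ¬ ((j : ℕ) < k) → xt k n (sgnB b1) j = sgnB b1 j * n j := by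
              intro j hj
              unfold xt
              rw [if_neg hj]
            have hx2s : ∀ j : Fin g, ¬ ((j : ℕ) < k) → xt k n (sgnB b2) j = sgnB b2 j * n j := by
              intro j hj
              unfold xt
              rw [if_neg hj]
            have hkey := key_products (x1 := xt k n (sgnB b1)) (x2 := xt k n (sgnB b2))
              (j0 := κ) (m := ((n κ : ℂ))) (D := Dset (k + 1) s t) hDκ ?_ ?_ ?_ ?_ ?_ heqv
            · -- use hkey to contradict hprod
              apply hprod
              have hval1 : ∀ j ∈ Dset (k + 1) s t, xt k n (sgnB b1) j = s j * n j := by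
                intro j hj
                have hjk1 := (hDval j hj).1
                rw [hx1s j (by omega), hb1 j hjk1]
              rw [hiκ]
              calc ∏ j ∈ Dset (k + 1) s t, ((n κ : ℂ) - s j * n j) ^ 2
                  = ∏ j ∈ Dset (k + 1) s t, ((n κ : ℂ) - xt k n (sgnB b1) j) ^ 2 :=
                    Finset.prod_congr rfl (fun j hj => by rw [hval1 j hj])
                _ = ∏ j ∈ Dset (k + 1) s t, ((n κ : ℂ) + xt k n (sgnB b1) j) ^ 2 := hkey
                _ = ∏ j ∈ Dset (k + 1) s t, ((n κ : ℂ) + s j * n j) ^ 2 :=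
                    Finset.prod_congr rfl (fun j hj => by rw [hval1 j hj])
            · -- h1 : off D, off κ agree
              intro q hqD hqκ
              by_cases hqk : (q : ℕ) < k
              · unfold xt
                rw [if_pos hqk, if_pos hqk]
              · have hqk1 : k + 1 ≤ (q : ℕ) := by
                  have : (q : ℕ) ≠ k := fun h => hqκ (Fin.ext (h.trans hκ.symm))
                  omega
                have hst : s q = t q := by
                  by_contra hst
                  exact hqD (by simp [Dset, hqk1, hst, Nat.lt_of_succ_le hqk1])
                rw [hx1s q hqk, hx2s q hqk, hb1 q hqk1, hb2 q hqk1, hst]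
            · -- h2 : on D opposite
              intro q hqD
              have hqk1 := (hDval q hqD).1
              have hst := (hDval q hqD).2
              have hqk : ¬ ((q : ℕ) < k) := by omega
              rw [hx1s q hqk, hx2s q hqk, hb1 q hqk1, hb2 q hqk1]
              rcases hs q hqk1 with h1' | h1' <;> rcases ht q hqk1 with h2' | h2'
              · exact absurd (h1'.trans h2'.symm) hst
              · rw [h1', h2']; ring
              · rw [h1', h2']; ring
              · exact absurd (h1'.trans h2'.symm) hst
            · -- hne
              intro q hqκ
              have hnq : n q ≠ n κ := fun h => hqκ (hmono.injective h)
              have hcast : ((n q : ℂ)) ≠ ((n κ : ℂ)) := fun h => hnq (Nat.cast_injective h)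
              rcases xt_signs (hvalsgn b1) q with h | h <;> rw [h]
              · exact ⟨hcast, cast_ne_neg_cast n hpos q κ⟩
              · constructor
                · intro hh
                  exact cast_ne_neg_cast n hpos κ q (by linear_combination -hh)
                · intro hh
                  exact hcast (by linear_combination -hh)
            · -- hinj1
              intro p q hpκ hqκ hpq
              exact fun h => hpq (sign_tuple_inj n hmono hpos _ (xt_signs (hvalsgn b1)) h)
            · -- hinj2
              intro p q hpκ hqκ hpq
              exact fun h => hpq (sign_tuple_inj n hmono hpos _ (xt_signs (hvalsgn b2)) h)

end TauAux


/-- The discriminant of `τ_N(n,v,·)` is not identically zero as a polynomial in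
`v₁,…,v_g`: there exists `v ∈ (ℂ*)^g` such that the degree-`N` polynomial
`τ_N(n,v,·) = (-1)^{⌊g/2⌋} det T(n,v,·)/θ(n)` has `N` simple roots, i.e.
`det T(n,v,u) = θ(n) (∏_p v_p) ∏_{i=1}^N (u - z_i)` for `N` pairwise distinct
`z_i`. -/
theorem tau_discriminant_not_identically_zero (g : ℕ) (hg : 0 < g)
    (n : Fin g → ℕ) (hmono : StrictMono n) (hpos : ∀ p, 0 < n p)
    (N : ℕ) (hN : N = ∑ p, n p) :
    ∃ v : Fin g → ℂ, (∀ p, v p ≠ 0) ∧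
      ∃ z : Fin N → ℂ, Function.Injective z ∧
        ∀ u : ℂ, Matrix.det (matT n v u) =
          vdm (fun p => (n p : ℂ)) * (∏ p, v p) * ∏ i, (u - z i) := by
  classical
  open TauAux in
  obtain ⟨v, hv, hSep, -⟩ := TauAux.main_induction n hmono hpos g (le_refl g)
  set s : Fin g → ℂ := fun _ => 1 with hs_def
  have hsval : TauAux.Valid g s := fun j hj => absurd j.isLt (not_lt.2 hj)
  set P : Polynomial ℂ := TauAux.PP g n s v with hP_def
  have hvne : ∀ j : Fin g, v j ≠ 0 := fun j => hv j j.isLt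
  have hfilter : Finset.univ.filter (fun j : Fin g => (j : ℕ) < g) = Finset.univ :=
    Finset.filter_true_of_mem (fun j _ => j.isLt)
  have hNk : TauAux.Nk g n = N := by
    rw [TauAux.Nk, hfilter, hN]
  have hyt : TauAux.yt g n s = fun j : Fin g => (n j : ℂ) := by
    funext j
    unfold TauAux.yt
    rw [if_pos j.isLt]
  have hndeg : P.natDegree = N := by
    rw [hP_def, TauAux.PP_natDegree g n hmono hpos hsval (fun j hj => hvne j), hNk]
  have hlc : P.leadingCoeff = (∏ j, v j) * vdm (fun j : Fin g => (n j : ℂ)) := by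
    rw [Polynomial.leadingCoeff, hndeg, ← hNk, hP_def, TauAux.PP_coeff_top g n hpos s v,
      hfilter, hyt]
  have hPne : P ≠ 0 := TauAux.PP_ne_zero g n hmono hpos hsval v
  have hsep : P.Separable := hSep s hsval
  have hnodup : P.roots.Nodup := Polynomial.nodup_roots hsep
  have hsplits : P.Splits := IsAlgClosed.splits P
  have hcard : P.roots.card = N := by
    rw [← hndeg]
    have h := (hsplits.natDegree_eq_card_roots).symm
    exact h
  set F : Finset ℂ := P.roots.toFinset with hF_def
  have hFval : F.val = P.roots := by
    rw [hF_def, Multiset.toFinset_val, Multiset.dedup_eq_self.2 hnodup]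
  have hFcard : F.card = N := by
    rw [Finset.card_def, hFval, hcard]
  set z : Fin N → ℂ := fun i => ((F.equivFin.symm (finCongr hFcard.symm i)) : ℂ) with hz_def
  have hzinj : Function.Injective z := by
    intro i j hij
    have h1 : F.equivFin.symm (finCongr hFcard.symm i)
        = F.equivFin.symm (finCongr hFcard.symm j) := Subtype.ext hij
    have h2 := F.equivFin.symm.injective h1
    exact (finCongr hFcard.symm).injective h2
  refine ⟨v, hvne, z, hzinj, fun u => ?_⟩
  -- determinant = eval of P
  have hdet : Matrix.det (matT n v u) = P.eval u := by
    rw [hP_def, TauAux.PP, TauAux.eval_det]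
    congr 1
    refine Matrix.ext fun p j => ?_
    simp only [Matrix.map_apply, TauAux.colMat, if_pos j.isLt, matT]
    rw [Polynomial.eval_add, Polynomial.eval_mul, Polynomial.eval_C, Polynomial.eval_pow,
      Polynomial.eval_X, Polynomial.eval_C]
    rw [neg_pow, pow_succ]
    ring
  have hfact := hsplits.eq_prod_roots
  have heval : P.eval u = P.leadingCoeff * (P.roots.map fun a => u - a).prod := by
    conv_lhs => rw [hfact]
    rw [Polynomial.eval_mul, Polynomial.eval_C, Polynomial.eval_multiset_prod,
      Multiset.map_map]
    congr 1
    rw [Multiset.map_congr rfl]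
    intro a _
    simp
  have hprodz : (P.roots.map fun a => u - a).prod = ∏ i, (u - z i) := by
    have h1 : ∏ a ∈ F, (u - a) = (P.roots.map fun a => u - a).prod := by
      rw [Finset.prod_eq_multiset_prod, hFval]
    have h2 : ∏ i : Fin N, (u - z i)
        = ∏ i : Fin N, (u - ((F.equivFin.symm (finCongr hFcard.symm i)) : ℂ)) := rfl
    have h3 : ∏ i : Fin N, (u - ((F.equivFin.symm (finCongr hFcard.symm i)) : ℂ))
        = ∏ j : Fin F.card, (u - ((F.equivFin.symm j) : ℂ)) :=
      Equiv.prod_comp (finCongr hFcard.symm) (fun j => u - ((F.equivFin.symm j) : ℂ))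
    have h4 : ∏ j : Fin F.card, (u - ((F.equivFin.symm j) : ℂ))
        = ∏ x : F, (u - (x : ℂ)) :=
      Equiv.prod_comp F.equivFin.symm (fun x : F => u - (x : ℂ))
    have h5 : ∏ x : F, (u - (x : ℂ)) = ∏ a ∈ F, (u - a) := Finset.prod_coe_sort F _
    rw [h2, h3, h4, h5, h1]
  rw [hdet, heval, hlc, hprodz]
  ring
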